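/- For any κ, κ' ∈ ℂ, the linear map T_κ^{κ'}(f) = Σ_{ℓ≥0} (1/ℓ!)((κ'-κ)/4)^ℓ ∂_ζ^{2ℓ} f on ℂ[ζ] satisfies T_κ^{κ'}(f *_κ g) = T_κ^{κ'}(f) *_{κ'} T_κ^{κ'}(g), i.e. it is an algebra isomorphism from (ℂ[ζ], *_κ) to (ℂ[ζ], *_{κ'}). -/
import Mathlib

open Polynomial Finset

/-- Iterated derivative on polynomials. -/
noncomputable def pderiv : ℕ → Polynomial ℂ → Polynomial ℂ :=
  fun ℓ => (fun p => Polynomial.derivative p)^[ℓ]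

/-- The commutative deformed product `f *_κ g = Σ_ℓ (1/ℓ!)(κ/2)^ℓ (∂^ℓ f)(∂^ℓ g)`;
the sum is finite on polynomials, all terms with `ℓ > natDegree f + natDegree g` vanish. -/
noncomputable def starK (κ : ℂ) (f g : Polynomial ℂ) : Polynomial ℂ :=
  ∑ ℓ ∈ Finset.range (f.natDegree + g.natDegree + 1),
    Polynomial.C ((κ / 2) ^ ℓ / (Nat.factorial ℓ : ℂ)) * pderiv ℓ f * pderiv ℓ g


/-- The intertwiner `T_κ^{κ'} = exp((κ'-κ)/4 ∂²)` on polynomials. -/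
noncomputable def TK (κ κ' : ℂ) (f : Polynomial ℂ) : Polynomial ℂ :=
  ∑ ℓ ∈ Finset.range (f.natDegree + 1),
    Polynomial.C (((κ' - κ) / 4) ^ ℓ / (Nat.factorial ℓ : ℂ)) * pderiv (2 * ℓ) f

/-! ### Basic lemmas about `pderiv` -/

lemma pderiv_eq (ℓ : ℕ) (f : Polynomial ℂ) :
    pderiv ℓ f = Polynomial.derivative^[ℓ] f := rfl

lemma pderiv_zero_apply (f : Polynomial ℂ) : pderiv 0 f = f := rfl

lemma pderiv_eq_zero {ℓ : ℕ} {f : Polynomial ℂ} (h : f.natDegree < ℓ) :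
    pderiv ℓ f = 0 := Polynomial.iterate_derivative_eq_zero h

lemma pderiv_add (ℓ : ℕ) (f g : Polynomial ℂ) :
    pderiv ℓ (f + g) = pderiv ℓ f + pderiv ℓ g := by
  induction ℓ with
  | zero => rfl
  | succ n ih =>
      simp only [pderiv_eq, Function.iterate_succ_apply'] at *
      rw [ih, map_add]

lemma pderiv_C_mul (ℓ : ℕ) (c : ℂ) (f : Polynomial ℂ) :
    pderiv ℓ (Polynomial.C c * f) = Polynomial.C c * pderiv ℓ f :=
  Polynomial.iterate_derivative_C_mul c f ℓ

lemma pderiv_derivative (ℓ : ℕ) (f : Polynomial ℂ) :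
    pderiv ℓ (Polynomial.derivative f) = pderiv (ℓ + 1) f := by
  rw [pderiv_eq, pderiv_eq, Function.iterate_succ_apply]

lemma derivative_pderiv (ℓ : ℕ) (f : Polynomial ℂ) :
    Polynomial.derivative (pderiv ℓ f) = pderiv (ℓ + 1) f := by
  rw [pderiv_eq, pderiv_eq, Function.iterate_succ_apply']

lemma pderiv_X_mul (ℓ : ℕ) (f : Polynomial ℂ) :
    pderiv (ℓ + 1) (Polynomial.X * f) =
      Polynomial.X * pderiv (ℓ + 1) f + Polynomial.C ((ℓ : ℂ) + 1) * pderiv ℓ f := by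
  induction ℓ with
  | zero =>
      rw [show ((0 : ℕ) : ℂ) + 1 = 1 by norm_num, Polynomial.C_1, one_mul]
      show Polynomial.derivative (Polynomial.X * f)
        = Polynomial.X * Polynomial.derivative f + f
      rw [Polynomial.derivative_mul, Polynomial.derivative_X]
      ring
  | succ n ih =>
      rw [← derivative_pderiv (n + 1), ih, map_add, Polynomial.derivative_mul,
        Polynomial.derivative_X, Polynomial.derivative_C_mul, derivative_pderiv,
        derivative_pderiv]
      have hC : (Polynomial.C ((↑(n + 1) : ℂ) + 1) : Polynomial ℂ)
          = Polynomial.C ((n : ℂ) + 1) + 1 := by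
        rw [show ((↑(n + 1) : ℂ) + 1) = ((n : ℂ) + 1) + 1 by push_cast; ring,
          Polynomial.C_add, Polynomial.C_1]
      rw [hC]
      ring

lemma natDegree_pderiv_le (ℓ : ℕ) (f : Polynomial ℂ) :
    (pderiv ℓ f).natDegree ≤ f.natDegree :=
  (Polynomial.natDegree_iterate_derivative f ℓ).trans (Nat.sub_le _ _)

/-! ### Fixed-range versions -/

/-- The star product with an explicit cutoff. -/
noncomputable def S (N : ℕ) (κ : ℂ) (f g : Polynomial ℂ) : Polynomial ℂ :=
  ∑ ℓ ∈ Finset.range N,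
    Polynomial.C ((κ / 2) ^ ℓ / (Nat.factorial ℓ : ℂ)) * pderiv ℓ f * pderiv ℓ g

/-- The intertwiner with an explicit cutoff. -/
noncomputable def T (N : ℕ) (κ κ' : ℂ) (f : Polynomial ℂ) : Polynomial ℂ :=
  ∑ ℓ ∈ Finset.range N,
    Polynomial.C (((κ' - κ) / 4) ^ ℓ / (Nat.factorial ℓ : ℂ)) * pderiv (2 * ℓ) f

lemma S_stable {M N : ℕ} (κ : ℂ) (f g : Polynomial ℂ)
    (hM : f.natDegree < M) (hMN : M ≤ N) : S N κ f g = S M κ f g := by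
  refine (Finset.sum_subset (Finset.range_subset_range.2 hMN) ?_).symm
  intro ℓ _ hℓ
  rw [Finset.mem_range, not_lt] at hℓ
  rw [pderiv_eq_zero (lt_of_lt_of_le hM hℓ)]
  ring

lemma S_eq_starK {N : ℕ} (κ : ℂ) (f g : Polynomial ℂ)
    (hN : f.natDegree + g.natDegree < N) : S N κ f g = starK κ f g := by
  rcases le_total N (f.natDegree + g.natDegree + 1) with h | h
  · have : N = f.natDegree + g.natDegree + 1 := le_antisymm h hN
    rw [this]; rfl
  · exact S_stable κ f g (by omega) h

lemma T_stable {M N : ℕ} (κ κ' : ℂ) (f : Polynomial ℂ)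
    (hM : f.natDegree < M) (hMN : M ≤ N) : T N κ κ' f = T M κ κ' f := by
  refine (Finset.sum_subset (Finset.range_subset_range.2 hMN) ?_).symm
  intro ℓ _ hℓ
  rw [Finset.mem_range, not_lt] at hℓ
  have : f.natDegree < 2 * ℓ := by omega
  rw [pderiv_eq_zero this]
  ring

lemma T_eq_TK {N : ℕ} (κ κ' : ℂ) (f : Polynomial ℂ)
    (hN : f.natDegree < N) : T N κ κ' f = TK κ κ' f := by
  rcases le_total N (f.natDegree + 1) with h | h
  · have : N = f.natDegree + 1 := le_antisymm h hN
    rw [this]; rfl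
  · exact T_stable κ κ' f (by omega) h

/-! ### Structural identities -/

lemma starK_add_left (κ : ℂ) (f₁ f₂ g : Polynomial ℂ) :
    starK κ (f₁ + f₂) g = starK κ f₁ g + starK κ f₂ g := by
  set N := (f₁ + f₂).natDegree + f₁.natDegree + f₂.natDegree + g.natDegree + 1 with hN
  have h1 : S N κ (f₁ + f₂) g = starK κ (f₁ + f₂) g := S_eq_starK _ _ _ (by omega)
  have h2 : S N κ f₁ g = starK κ f₁ g := S_eq_starK _ _ _ (by omega)
  have h3 : S N κ f₂ g = starK κ f₂ g := S_eq_starK _ _ _ (by omega)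
  rw [← h1, ← h2, ← h3, S, S, S, ← Finset.sum_add_distrib]
  refine Finset.sum_congr rfl fun ℓ _ => ?_
  rw [pderiv_add]; ring

lemma starK_C_mul_left (κ : ℂ) (c : ℂ) (f g : Polynomial ℂ) :
    starK κ (Polynomial.C c * f) g = Polynomial.C c * starK κ f g := by
  set N := (Polynomial.C c * f).natDegree + f.natDegree + g.natDegree + 1 with hN
  rw [← S_eq_starK (N := N) κ _ g (by omega), ← S_eq_starK (N := N) κ f g (by omega),
    S, S, Finset.mul_sum]
  refine Finset.sum_congr rfl fun ℓ _ => ?_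
  rw [pderiv_C_mul]; ring

lemma starK_C_left (κ : ℂ) (c : ℂ) (g : Polynomial ℂ) :
    starK κ (Polynomial.C c) g = Polynomial.C c * g := by
  rw [← S_eq_starK (N := g.natDegree + 1) κ _ g (by simp),
    S, Finset.sum_eq_single 0]
  · simp [pderiv_zero_apply]
  · intro ℓ _ hℓ
    rw [pderiv_eq_zero (by simpa using Nat.pos_of_ne_zero hℓ)]
    ring
  · simp

lemma TK_add (κ κ' : ℂ) (f₁ f₂ : Polynomial ℂ) :
    TK κ κ' (f₁ + f₂) = TK κ κ' f₁ + TK κ κ' f₂ := by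
  set N := (f₁ + f₂).natDegree + f₁.natDegree + f₂.natDegree + 1 with hN
  rw [← T_eq_TK (N := N) κ κ' _ (by omega), ← T_eq_TK (N := N) κ κ' f₁ (by omega),
    ← T_eq_TK (N := N) κ κ' f₂ (by omega), T, T, T, ← Finset.sum_add_distrib]
  refine Finset.sum_congr rfl fun ℓ _ => ?_
  rw [pderiv_add]; ring

lemma TK_C_mul (κ κ' : ℂ) (c : ℂ) (f : Polynomial ℂ) :
    TK κ κ' (Polynomial.C c * f) = Polynomial.C c * TK κ κ' f := by
  set N := (Polynomial.C c * f).natDegree + f.natDegree + 1 with hN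
  rw [← T_eq_TK (N := N) κ κ' _ (by omega), ← T_eq_TK (N := N) κ κ' f (by omega),
    T, T, Finset.mul_sum]
  refine Finset.sum_congr rfl fun ℓ _ => ?_
  rw [pderiv_C_mul]; ring

lemma TK_C (κ κ' : ℂ) (c : ℂ) : TK κ κ' (Polynomial.C c) = Polynomial.C c := by
  rw [TK]
  simp [Polynomial.natDegree_C, pderiv_zero_apply]

lemma TK_derivative (κ κ' : ℂ) (f : Polynomial ℂ) :
    TK κ κ' (Polynomial.derivative f) = Polynomial.derivative (TK κ κ' f) := by
  set N := f.natDegree + 1 with hN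
  have hd : (Polynomial.derivative f).natDegree < N := by
    have := Polynomial.natDegree_derivative_le f
    omega
  rw [← T_eq_TK (N := N) κ κ' _ hd, ← T_eq_TK (N := N) κ κ' f (by omega), T, T, map_sum]
  refine Finset.sum_congr rfl fun ℓ _ => ?_
  rw [Polynomial.derivative_C_mul, pderiv_derivative, derivative_pderiv]

lemma derivative_starK (κ : ℂ) (f g : Polynomial ℂ) :
    Polynomial.derivative (starK κ f g) =
      starK κ (Polynomial.derivative f) g + starK κ f (Polynomial.derivative g) := by
  set N := f.natDegree + g.natDegree + 1 with hN
  have hdf : (Polynomial.derivative f).natDegree + g.natDegree < N := by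
    have := Polynomial.natDegree_derivative_le f; omega
  have hdg : f.natDegree + (Polynomial.derivative g).natDegree < N := by
    have := Polynomial.natDegree_derivative_le g; omega
  rw [← S_eq_starK (N := N) κ f g (by omega), ← S_eq_starK (N := N) κ _ g hdf,
    ← S_eq_starK (N := N) κ f _ hdg, S, S, S, map_sum, ← Finset.sum_add_distrib]
  refine Finset.sum_congr rfl fun ℓ _ => ?_
  simp only [Polynomial.derivative_mul, Polynomial.derivative_C, zero_mul, zero_add,
    derivative_pderiv, pderiv_derivative]

lemma starK_X_mul_left (κ : ℂ) (f g : Polynomial ℂ) :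
    starK κ (Polynomial.X * f) g =
      Polynomial.X * starK κ f g
        + Polynomial.C (κ / 2) * starK κ f (Polynomial.derivative g) := by
  set M := (Polynomial.X * f).natDegree + f.natDegree + g.natDegree + 1 with hM
  have hdg : f.natDegree + (Polynomial.derivative g).natDegree < M := by
    have := Polynomial.natDegree_derivative_le g; omega
  rw [← S_eq_starK (N := M + 1) κ _ g (by omega), ← S_eq_starK (N := M + 1) κ f g (by omega),
    ← S_eq_starK (N := M) κ f _ hdg, S, S, S,
    Finset.sum_range_succ' _ M, Finset.sum_range_succ' _ M]
  have key : ∀ k ∈ Finset.range M,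
      Polynomial.C ((κ / 2) ^ (k + 1) / (Nat.factorial (k + 1) : ℂ))
          * pderiv (k + 1) (Polynomial.X * f) * pderiv (k + 1) g
      = Polynomial.X * (Polynomial.C ((κ / 2) ^ (k + 1) / (Nat.factorial (k + 1) : ℂ))
            * pderiv (k + 1) f * pderiv (k + 1) g)
        + Polynomial.C (κ / 2) * (Polynomial.C ((κ / 2) ^ k / (Nat.factorial k : ℂ))
            * pderiv k f * pderiv k (Polynomial.derivative g)) := by
    intro k _
    rw [pderiv_X_mul, pderiv_derivative]
    have hc : (Polynomial.C ((κ / 2) ^ (k + 1) / (Nat.factorial (k + 1) : ℂ)))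
          * Polynomial.C ((k : ℂ) + 1)
        = Polynomial.C (κ / 2) * Polynomial.C ((κ / 2) ^ k / (Nat.factorial k : ℂ)) := by
      rw [← Polynomial.C_mul, ← Polynomial.C_mul]
      congr 1
      have h2 : ((k : ℂ) + 1) ≠ 0 := Nat.cast_add_one_ne_zero k
      have h3 : ((Nat.factorial k : ℕ) : ℂ) ≠ 0 :=
        Nat.cast_ne_zero.2 (Nat.factorial_ne_zero k)
      rw [show ((Nat.factorial (k + 1) : ℕ) : ℂ)
        = ((k : ℂ) + 1) * ((Nat.factorial k : ℕ) : ℂ) by push_cast [Nat.factorial_succ]; ring]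
      field_simp
      ring
    linear_combination (pderiv k f * pderiv (k + 1) g) * hc
  rw [Finset.sum_congr rfl key, Finset.sum_add_distrib]
  have h0 : Polynomial.C ((κ / 2) ^ 0 / (Nat.factorial 0 : ℂ))
        * pderiv 0 (Polynomial.X * f) * pderiv 0 g
      = Polynomial.X * (Polynomial.C ((κ / 2) ^ 0 / (Nat.factorial 0 : ℂ))
        * pderiv 0 f * pderiv 0 g) := by
    simp only [pderiv_zero_apply, pow_zero, Nat.factorial_zero, Nat.cast_one]
    ring
  rw [h0, mul_add, Finset.mul_sum, Finset.mul_sum]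
  ring

lemma TK_X_mul (κ κ' : ℂ) (f : Polynomial ℂ) :
    TK κ κ' (Polynomial.X * f) =
      Polynomial.X * TK κ κ' f
        + Polynomial.C ((κ' - κ) / 2) * TK κ κ' (Polynomial.derivative f) := by
  set M := (Polynomial.X * f).natDegree + f.natDegree + 1 with hM
  have hdf : (Polynomial.derivative f).natDegree < M := by
    have := Polynomial.natDegree_derivative_le f; omega
  rw [← T_eq_TK (N := M + 1) κ κ' _ (by omega), ← T_eq_TK (N := M + 1) κ κ' f (by omega),
    ← T_eq_TK (N := M) κ κ' _ hdf, T, T, T,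
    Finset.sum_range_succ' _ M, Finset.sum_range_succ' _ M]
  have key : ∀ k ∈ Finset.range M,
      Polynomial.C (((κ' - κ) / 4) ^ (k + 1) / (Nat.factorial (k + 1) : ℂ))
          * pderiv (2 * (k + 1)) (Polynomial.X * f)
      = Polynomial.X * (Polynomial.C (((κ' - κ) / 4) ^ (k + 1) / (Nat.factorial (k + 1) : ℂ))
            * pderiv (2 * (k + 1)) f)
        + Polynomial.C ((κ' - κ) / 2)
            * (Polynomial.C (((κ' - κ) / 4) ^ k / (Nat.factorial k : ℂ))
              * pderiv (2 * k) (Polynomial.derivative f)) := by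
    intro k _
    rw [show 2 * (k + 1) = (2 * k + 1) + 1 by ring, pderiv_X_mul,
      show (2 * k + 1) + 1 = 2 * (k + 1) by ring, pderiv_derivative,
      show (2 * k) + 1 = 2 * k + 1 by rfl]
    have hc : (Polynomial.C (((κ' - κ) / 4) ^ (k + 1) / (Nat.factorial (k + 1) : ℂ)))
          * Polynomial.C (((2 * k + 1 : ℕ) : ℂ) + 1)
        = Polynomial.C ((κ' - κ) / 2)
            * Polynomial.C (((κ' - κ) / 4) ^ k / (Nat.factorial k : ℂ)) := by
      rw [← Polynomial.C_mul, ← Polynomial.C_mul]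
      congr 1
      have h2 : ((k : ℂ) + 1) ≠ 0 := Nat.cast_add_one_ne_zero k
      have h3 : ((Nat.factorial k : ℕ) : ℂ) ≠ 0 :=
        Nat.cast_ne_zero.2 (Nat.factorial_ne_zero k)
      rw [show ((Nat.factorial (k + 1) : ℕ) : ℂ)
        = ((k : ℂ) + 1) * ((Nat.factorial k : ℕ) : ℂ) by push_cast [Nat.factorial_succ]; ring,
        show (((2 * k + 1 : ℕ) : ℂ) + 1) = 2 * ((k : ℂ) + 1) by push_cast; ring]
      field_simp
      ring
    linear_combination (pderiv (2 * k + 1) f) * hc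
  rw [Finset.sum_congr rfl key, Finset.sum_add_distrib]
  have h0 : Polynomial.C (((κ' - κ) / 4) ^ 0 / (Nat.factorial 0 : ℂ))
        * pderiv (2 * 0) (Polynomial.X * f)
      = Polynomial.X * (Polynomial.C (((κ' - κ) / 4) ^ 0 / (Nat.factorial 0 : ℂ))
        * pderiv (2 * 0) f) := by
    simp only [pderiv_zero_apply, pow_zero, Nat.factorial_zero, Nat.cast_one, Nat.mul_zero]
    show (Polynomial.C (1 / 1) : Polynomial ℂ) * pderiv 0 (Polynomial.X * f)
      = Polynomial.X * (Polynomial.C (1 / 1) * pderiv 0 f)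
    simp only [pderiv_zero_apply]
    ring
  rw [h0, mul_add, Finset.mul_sum, Finset.mul_sum]
  ring

theorem TK_intertwines (κ κ' : ℂ) (f g : Polynomial ℂ) :
    TK κ κ' (starK κ f g) = starK κ' (TK κ κ' f) (TK κ κ' g) := by
  induction f using Polynomial.induction_on generalizing g with
  | C c =>
      rw [starK_C_left, TK_C_mul, TK_C, starK_C_left]
  | add p q hp hq =>
      rw [starK_add_left, TK_add, hp, hq, TK_add, starK_add_left]
  | monomial n c ih =>
      have hx : Polynomial.C c * Polynomial.X ^ (n + 1)
          = Polynomial.X * (Polynomial.C c * Polynomial.X ^ n) := by ring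
      rw [hx, starK_X_mul_left, TK_add, TK_C_mul, TK_X_mul, TK_derivative, ih g,
        derivative_starK, ih (Polynomial.derivative g), TK_derivative,
        TK_X_mul, starK_add_left, starK_X_mul_left, starK_C_mul_left, TK_derivative]
      have hC : Polynomial.C ((κ' - κ) / 2) + Polynomial.C (κ / 2)
          = Polynomial.C (κ' / 2) := by
        rw [← Polynomial.C_add]
        congr 1
        ring
      linear_combination (starK κ' (TK κ κ' (Polynomial.C c * Polynomial.X ^ n))
        (Polynomial.derivative (TK κ κ' g))) * hC
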